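/- Suppose the zero-current condition (1/c²)∂F₀b/∂t − ∂F₁b/∂x = 0 holds on all of ℝ² for every b ∈ {0,1,2,3}. Then either all of the field strengths F₀₁, F₀₂, F₀₃, F₁₂, F₁₃ vanish identically on ℝ², or α₀² = c²α₁²; that is, every zero-current electromagnetic plane wave with nonvanishing field travels at the speed of light c. -/

import Mathlib

/-- Plane-wave gauge potential `A_a(t,x) = E_a sin(α₀t + α₁x + β_a)`. -/
noncomputable def gaugePot (α₀ α₁ : ℝ) (E β : Fin 4 → ℝ) (a : Fin 4) (t x : ℝ) : ℝ :=
  E a * Real.sin (α₀ * t + α₁ * x + β a)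

/-- Deformed field strengths `F_{ab}` of the κ-Minkowski plane wave:
`F₀₁ = ∂A₁/∂t − (1+kA₀)∂A₀/∂x + kc²A₁∂A₁/∂x`,
`F₀ⱼ = ∂Aⱼ/∂t + kc²A₁∂Aⱼ/∂x` and `F₁ⱼ = (1+kA₀)∂Aⱼ/∂x` for `j = 2,3`,
`F₁₀ = −F₀₁`, `F₀₀ = F₁₁ = 0`, all others zero. -/
noncomputable def fieldStrength (c k α₀ α₁ : ℝ) (E β : Fin 4 → ℝ)
    (a b : Fin 4) (t x : ℝ) : ℝ :=
  let A := gaugePot α₀ α₁ E β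
  let At : Fin 4 → ℝ → ℝ → ℝ := fun a t x => deriv (fun s => A a s x) t
  let Ax : Fin 4 → ℝ → ℝ → ℝ := fun a t x => deriv (fun y => A a t y) x
  let F01 : ℝ → ℝ → ℝ := fun t x =>
    At 1 t x - (1 + k * A 0 t x) * Ax 0 t x + k * c^2 * A 1 t x * Ax 1 t x
  if a = 0 ∧ b = 1 then F01 t x
  else if a = 1 ∧ b = 0 then -(F01 t x)
  else if a = 0 ∧ (b = 2 ∨ b = 3) then At b t x + k * c^2 * A 1 t x * Ax b t x
  else if a = 1 ∧ (b = 2 ∨ b = 3) then (1 + k * A 0 t x) * Ax b t x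
  else 0

/-! ### Auxiliary derivative lemmas -/

lemma hasDerivAt_sin_t (Ea ba α₀ α₁ x t : ℝ) :
    HasDerivAt (fun s => Ea * Real.sin (α₀ * s + α₁ * x + ba))
      (Ea * (Real.cos (α₀ * t + α₁ * x + ba) * α₀)) t := by
  have h : HasDerivAt (fun s : ℝ => α₀ * s + α₁ * x + ba) α₀ t := by
    simpa using (((hasDerivAt_id t).const_mul α₀).add_const (α₁ * x)).add_const ba
  simpa [Function.comp] using ((Real.hasDerivAt_sin _).comp t h).const_mul Ea

lemma hasDerivAt_sin_x (Ea ba α₀ α₁ t x : ℝ) :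
    HasDerivAt (fun y => Ea * Real.sin (α₀ * t + α₁ * y + ba))
      (Ea * (Real.cos (α₀ * t + α₁ * x + ba) * α₁)) x := by
  have h : HasDerivAt (fun y : ℝ => α₀ * t + α₁ * y + ba) α₁ x := by
    simpa using (((hasDerivAt_id x).const_mul α₁).const_add (α₀ * t)).add_const ba
  simpa [Function.comp] using ((Real.hasDerivAt_sin _).comp x h).const_mul Ea

lemma hasDerivAt_cos_t (Ea ba m α₀ α₁ x t : ℝ) :
    HasDerivAt (fun s => Ea * (Real.cos (α₀ * s + α₁ * x + ba) * m))
      (Ea * (-Real.sin (α₀ * t + α₁ * x + ba) * α₀ * m)) t := by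
  have h : HasDerivAt (fun s : ℝ => α₀ * s + α₁ * x + ba) α₀ t := by
    simpa using (((hasDerivAt_id t).const_mul α₀).add_const (α₁ * x)).add_const ba
  have := (((Real.hasDerivAt_cos _).comp t h).mul_const m).const_mul Ea
  simpa [Function.comp, mul_assoc] using this

lemma hasDerivAt_cos_x (Ea ba m α₀ α₁ t x : ℝ) :
    HasDerivAt (fun y => Ea * (Real.cos (α₀ * t + α₁ * y + ba) * m))
      (Ea * (-Real.sin (α₀ * t + α₁ * x + ba) * α₁ * m)) x := by
  have h : HasDerivAt (fun y : ℝ => α₀ * t + α₁ * y + ba) α₁ x := by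
    simpa using (((hasDerivAt_id x).const_mul α₁).const_add (α₀ * t)).add_const ba
  have := (((Real.hasDerivAt_cos _).comp x h).mul_const m).const_mul Ea
  simpa [Function.comp, mul_assoc] using this

/-! ### Closed forms of field strengths -/

lemma F01_eval (c k α₀ α₁ : ℝ) (E β : Fin 4 → ℝ) (t x : ℝ) :
    fieldStrength c k α₀ α₁ E β 0 1 t x =
      E 1 * (Real.cos (α₀ * t + α₁ * x + β 1) * α₀)
      - (1 + k * (E 0 * Real.sin (α₀ * t + α₁ * x + β 0)))
          * (E 0 * (Real.cos (α₀ * t + α₁ * x + β 0) * α₁))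
      + k * c^2 * (E 1 * Real.sin (α₀ * t + α₁ * x + β 1))
          * (E 1 * (Real.cos (α₀ * t + α₁ * x + β 1) * α₁)) := by
  simp only [fieldStrength]
  rw [if_pos (by decide)]
  simp only [gaugePot]
  rw [(hasDerivAt_sin_t (E 1) (β 1) α₀ α₁ x t).deriv,
      (hasDerivAt_sin_x (E 0) (β 0) α₀ α₁ t x).deriv,
      (hasDerivAt_sin_x (E 1) (β 1) α₀ α₁ t x).deriv]

lemma F00_eval (c k α₀ α₁ : ℝ) (E β : Fin 4 → ℝ) (t x : ℝ) :
    fieldStrength c k α₀ α₁ E β 0 0 t x = 0 := by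
  simp only [fieldStrength]
  rw [if_neg (by decide), if_neg (by decide), if_neg (by decide), if_neg (by decide)]

lemma F11_eval (c k α₀ α₁ : ℝ) (E β : Fin 4 → ℝ) (t x : ℝ) :
    fieldStrength c k α₀ α₁ E β 1 1 t x = 0 := by
  simp only [fieldStrength]
  rw [if_neg (by decide), if_neg (by decide), if_neg (by decide), if_neg (by decide)]

lemma F10_eval (c k α₀ α₁ : ℝ) (E β : Fin 4 → ℝ) (t x : ℝ) :
    fieldStrength c k α₀ α₁ E β 1 0 t x = -(fieldStrength c k α₀ α₁ E β 0 1 t x) := by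
  simp only [fieldStrength]
  rw [if_neg (by decide), if_pos (by decide), if_pos (by decide)]

lemma F02_eval (c k α₀ α₁ : ℝ) (E β : Fin 4 → ℝ) (t x : ℝ) :
    fieldStrength c k α₀ α₁ E β 0 2 t x =
      E 2 * (Real.cos (α₀ * t + α₁ * x + β 2) * α₀)
      + k * c^2 * (E 1 * Real.sin (α₀ * t + α₁ * x + β 1))
          * (E 2 * (Real.cos (α₀ * t + α₁ * x + β 2) * α₁)) := by
  simp only [fieldStrength]
  rw [if_neg (by decide), if_neg (by decide), if_pos (by decide)]
  simp only [gaugePot]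
  rw [(hasDerivAt_sin_t (E 2) (β 2) α₀ α₁ x t).deriv,
      (hasDerivAt_sin_x (E 2) (β 2) α₀ α₁ t x).deriv]

lemma F12_eval (c k α₀ α₁ : ℝ) (E β : Fin 4 → ℝ) (t x : ℝ) :
    fieldStrength c k α₀ α₁ E β 1 2 t x =
      (1 + k * (E 0 * Real.sin (α₀ * t + α₁ * x + β 0)))
        * (E 2 * (Real.cos (α₀ * t + α₁ * x + β 2) * α₁)) := by
  simp only [fieldStrength]
  rw [if_neg (by decide), if_neg (by decide), if_neg (by decide), if_pos (by decide)]
  simp only [gaugePot]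
  rw [(hasDerivAt_sin_x (E 2) (β 2) α₀ α₁ t x).deriv]

lemma F03_eval (c k α₀ α₁ : ℝ) (E β : Fin 4 → ℝ) (t x : ℝ) :
    fieldStrength c k α₀ α₁ E β 0 3 t x =
      E 3 * (Real.cos (α₀ * t + α₁ * x + β 3) * α₀)
      + k * c^2 * (E 1 * Real.sin (α₀ * t + α₁ * x + β 1))
          * (E 3 * (Real.cos (α₀ * t + α₁ * x + β 3) * α₁)) := by
  simp only [fieldStrength]
  rw [if_neg (by decide), if_neg (by decide), if_pos (by decide)]
  simp only [gaugePot]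
  rw [(hasDerivAt_sin_t (E 3) (β 3) α₀ α₁ x t).deriv,
      (hasDerivAt_sin_x (E 3) (β 3) α₀ α₁ t x).deriv]

lemma F13_eval (c k α₀ α₁ : ℝ) (E β : Fin 4 → ℝ) (t x : ℝ) :
    fieldStrength c k α₀ α₁ E β 1 3 t x =
      (1 + k * (E 0 * Real.sin (α₀ * t + α₁ * x + β 0)))
        * (E 3 * (Real.cos (α₀ * t + α₁ * x + β 3) * α₁)) := by
  simp only [fieldStrength]
  rw [if_neg (by decide), if_neg (by decide), if_neg (by decide), if_pos (by decide)]
  simp only [gaugePot]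
  rw [(hasDerivAt_sin_x (E 3) (β 3) α₀ α₁ t x).deriv]

/-! ### Derivatives of the field strengths -/

lemma derivF01_t (c k α₀ α₁ : ℝ) (E β : Fin 4 → ℝ) (t x : ℝ) :
    deriv (fun s => fieldStrength c k α₀ α₁ E β 0 1 s x) t =
      α₀ * (-(E 1 * α₀ * Real.sin (α₀ * t + α₁ * x + β 1))
        + E 0 * α₁ * Real.sin (α₀ * t + α₁ * x + β 0)
        + k * E 0 ^ 2 * α₁ * (Real.sin (α₀ * t + α₁ * x + β 0) ^ 2
            - Real.cos (α₀ * t + α₁ * x + β 0) ^ 2)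
        + k * c ^ 2 * E 1 ^ 2 * α₁ * (Real.cos (α₀ * t + α₁ * x + β 1) ^ 2
            - Real.sin (α₀ * t + α₁ * x + β 1) ^ 2)) := by
  have hfun : (fun s => fieldStrength c k α₀ α₁ E β 0 1 s x) = fun s =>
      E 1 * (Real.cos (α₀ * s + α₁ * x + β 1) * α₀)
      - (1 + k * (E 0 * Real.sin (α₀ * s + α₁ * x + β 0)))
          * (E 0 * (Real.cos (α₀ * s + α₁ * x + β 0) * α₁))
      + k * c^2 * (E 1 * Real.sin (α₀ * s + α₁ * x + β 1))
          * (E 1 * (Real.cos (α₀ * s + α₁ * x + β 1) * α₁)) :=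
    funext fun s => F01_eval c k α₀ α₁ E β s x
  rw [hfun]
  have h1 := hasDerivAt_cos_t (E 1) (β 1) α₀ α₀ α₁ x t
  have h2 := (((hasDerivAt_sin_t (E 0) (β 0) α₀ α₁ x t).const_mul k).const_add 1).mul
      (hasDerivAt_cos_t (E 0) (β 0) α₁ α₀ α₁ x t)
  have h3 := ((hasDerivAt_sin_t (E 1) (β 1) α₀ α₁ x t).const_mul (k*c^2)).mul
      (hasDerivAt_cos_t (E 1) (β 1) α₁ α₀ α₁ x t)
  refine (((h1.sub h2).add h3).deriv).trans ?_
  ring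

lemma derivF10_x (c k α₀ α₁ : ℝ) (E β : Fin 4 → ℝ) (t x : ℝ) :
    deriv (fun y => fieldStrength c k α₀ α₁ E β 1 0 t y) x =
      -(α₁ * (-(E 1 * α₀ * Real.sin (α₀ * t + α₁ * x + β 1))
        + E 0 * α₁ * Real.sin (α₀ * t + α₁ * x + β 0)
        + k * E 0 ^ 2 * α₁ * (Real.sin (α₀ * t + α₁ * x + β 0) ^ 2
            - Real.cos (α₀ * t + α₁ * x + β 0) ^ 2)
        + k * c ^ 2 * E 1 ^ 2 * α₁ * (Real.cos (α₀ * t + α₁ * x + β 1) ^ 2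
            - Real.sin (α₀ * t + α₁ * x + β 1) ^ 2))) := by
  have hfun : (fun y => fieldStrength c k α₀ α₁ E β 1 0 t y) = fun y =>
      -(E 1 * (Real.cos (α₀ * t + α₁ * y + β 1) * α₀)
      - (1 + k * (E 0 * Real.sin (α₀ * t + α₁ * y + β 0)))
          * (E 0 * (Real.cos (α₀ * t + α₁ * y + β 0) * α₁))
      + k * c^2 * (E 1 * Real.sin (α₀ * t + α₁ * y + β 1))
          * (E 1 * (Real.cos (α₀ * t + α₁ * y + β 1) * α₁))) :=
    funext fun y => by rw [F10_eval, F01_eval]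
  rw [hfun]
  have h1 := hasDerivAt_cos_x (E 1) (β 1) α₀ α₀ α₁ t x
  have h2 := (((hasDerivAt_sin_x (E 0) (β 0) α₀ α₁ t x).const_mul k).const_add 1).mul
      (hasDerivAt_cos_x (E 0) (β 0) α₁ α₀ α₁ t x)
  have h3 := ((hasDerivAt_sin_x (E 1) (β 1) α₀ α₁ t x).const_mul (k*c^2)).mul
      (hasDerivAt_cos_x (E 1) (β 1) α₁ α₀ α₁ t x)
  refine ((((h1.sub h2).add h3).neg).deriv).trans ?_
  ring

lemma derivF00_t (c k α₀ α₁ : ℝ) (E β : Fin 4 → ℝ) (t x : ℝ) :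
    deriv (fun s => fieldStrength c k α₀ α₁ E β 0 0 s x) t = 0 := by
  rw [show (fun s => fieldStrength c k α₀ α₁ E β 0 0 s x) = fun _ => (0:ℝ) from
    funext fun s => F00_eval c k α₀ α₁ E β s x]
  exact deriv_const t 0

lemma derivF11_x (c k α₀ α₁ : ℝ) (E β : Fin 4 → ℝ) (t x : ℝ) :
    deriv (fun y => fieldStrength c k α₀ α₁ E β 1 1 t y) x = 0 := by
  rw [show (fun y => fieldStrength c k α₀ α₁ E β 1 1 t y) = fun _ => (0:ℝ) from
    funext fun y => F11_eval c k α₀ α₁ E β t y]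
  exact deriv_const x 0

lemma derivF02_t (c k α₀ α₁ : ℝ) (E β : Fin 4 → ℝ) (t x : ℝ) :
    deriv (fun s => fieldStrength c k α₀ α₁ E β 0 2 s x) t =
      α₀ * (-(E 2 * α₀ * Real.sin (α₀ * t + α₁ * x + β 2))
        + k * c ^ 2 * E 1 * E 2 * α₁ *
          (Real.cos (α₀ * t + α₁ * x + β 1) * Real.cos (α₀ * t + α₁ * x + β 2)
            - Real.sin (α₀ * t + α₁ * x + β 1) * Real.sin (α₀ * t + α₁ * x + β 2))) := by
  have hfun : (fun s => fieldStrength c k α₀ α₁ E β 0 2 s x) = fun s =>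
      E 2 * (Real.cos (α₀ * s + α₁ * x + β 2) * α₀)
      + k * c^2 * (E 1 * Real.sin (α₀ * s + α₁ * x + β 1))
          * (E 2 * (Real.cos (α₀ * s + α₁ * x + β 2) * α₁)) :=
    funext fun s => F02_eval c k α₀ α₁ E β s x
  rw [hfun]
  have h1 := hasDerivAt_cos_t (E 2) (β 2) α₀ α₀ α₁ x t
  have h2 := ((hasDerivAt_sin_t (E 1) (β 1) α₀ α₁ x t).const_mul (k*c^2)).mul
      (hasDerivAt_cos_t (E 2) (β 2) α₁ α₀ α₁ x t)
  refine ((h1.add h2).deriv).trans ?_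
  ring

lemma derivF12_x (c k α₀ α₁ : ℝ) (E β : Fin 4 → ℝ) (t x : ℝ) :
    deriv (fun y => fieldStrength c k α₀ α₁ E β 1 2 t y) x =
      α₁ * (-(E 2 * α₁ * Real.sin (α₀ * t + α₁ * x + β 2))
        + k * E 0 * E 2 * α₁ *
          (Real.cos (α₀ * t + α₁ * x + β 0) * Real.cos (α₀ * t + α₁ * x + β 2)
            - Real.sin (α₀ * t + α₁ * x + β 0) * Real.sin (α₀ * t + α₁ * x + β 2))
        - k * E 0 * E 2 * α₁ * Real.sin (α₀ * t + α₁ * x + β 2)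
            * Real.sin (α₀ * t + α₁ * x + β 0) * 0) := by
  have hfun : (fun y => fieldStrength c k α₀ α₁ E β 1 2 t y) = fun y =>
      (1 + k * (E 0 * Real.sin (α₀ * t + α₁ * y + β 0)))
        * (E 2 * (Real.cos (α₀ * t + α₁ * y + β 2) * α₁)) :=
    funext fun y => F12_eval c k α₀ α₁ E β t y
  rw [hfun]
  have h2 := (((hasDerivAt_sin_x (E 0) (β 0) α₀ α₁ t x).const_mul k).const_add 1).mul
      (hasDerivAt_cos_x (E 2) (β 2) α₁ α₀ α₁ t x)
  refine (h2.deriv).trans ?_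
  ring

lemma derivF03_t (c k α₀ α₁ : ℝ) (E β : Fin 4 → ℝ) (t x : ℝ) :
    deriv (fun s => fieldStrength c k α₀ α₁ E β 0 3 s x) t =
      α₀ * (-(E 3 * α₀ * Real.sin (α₀ * t + α₁ * x + β 3))
        + k * c ^ 2 * E 1 * E 3 * α₁ *
          (Real.cos (α₀ * t + α₁ * x + β 1) * Real.cos (α₀ * t + α₁ * x + β 3)
            - Real.sin (α₀ * t + α₁ * x + β 1) * Real.sin (α₀ * t + α₁ * x + β 3))) := by
  have hfun : (fun s => fieldStrength c k α₀ α₁ E β 0 3 s x) = fun s =>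
      E 3 * (Real.cos (α₀ * s + α₁ * x + β 3) * α₀)
      + k * c^2 * (E 1 * Real.sin (α₀ * s + α₁ * x + β 1))
          * (E 3 * (Real.cos (α₀ * s + α₁ * x + β 3) * α₁)) :=
    funext fun s => F03_eval c k α₀ α₁ E β s x
  rw [hfun]
  have h1 := hasDerivAt_cos_t (E 3) (β 3) α₀ α₀ α₁ x t
  have h2 := ((hasDerivAt_sin_t (E 1) (β 1) α₀ α₁ x t).const_mul (k*c^2)).mul
      (hasDerivAt_cos_t (E 3) (β 3) α₁ α₀ α₁ x t)
  refine ((h1.add h2).deriv).trans ?_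
  ring

lemma derivF13_x (c k α₀ α₁ : ℝ) (E β : Fin 4 → ℝ) (t x : ℝ) :
    deriv (fun y => fieldStrength c k α₀ α₁ E β 1 3 t y) x =
      α₁ * (-(E 3 * α₁ * Real.sin (α₀ * t + α₁ * x + β 3))
        + k * E 0 * E 3 * α₁ *
          (Real.cos (α₀ * t + α₁ * x + β 0) * Real.cos (α₀ * t + α₁ * x + β 3)
            - Real.sin (α₀ * t + α₁ * x + β 0) * Real.sin (α₀ * t + α₁ * x + β 3))) := by
  have hfun : (fun y => fieldStrength c k α₀ α₁ E β 1 3 t y) = fun y =>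
      (1 + k * (E 0 * Real.sin (α₀ * t + α₁ * y + β 0)))
        * (E 3 * (Real.cos (α₀ * t + α₁ * y + β 3) * α₁)) :=
    funext fun y => F13_eval c k α₀ α₁ E β t y
  rw [hfun]
  have h2 := (((hasDerivAt_sin_x (E 0) (β 0) α₀ α₁ t x).const_mul k).const_add 1).mul
      (hasDerivAt_cos_x (E 3) (β 3) α₁ α₀ α₁ t x)
  refine (h2.deriv).trans ?_
  ring

/-! ### Linear independence of trigonometric functions -/

lemma trig4 (A B C D : ℝ)
    (h : ∀ φ : ℝ, A * Real.sin φ + B * Real.cos φ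
        + C * (2 * Real.sin φ * Real.cos φ)
        + D * (Real.cos φ ^ 2 - Real.sin φ ^ 2) = 0) :
    A = 0 ∧ B = 0 ∧ C = 0 ∧ D = 0 := by
  have h0 := h 0
  have h1 := h Real.pi
  have h2 := h (Real.pi / 2)
  have h3 := h (Real.pi / 4)
  simp [Real.sin_pi, Real.cos_pi, Real.sin_pi_div_two, Real.cos_pi_div_two,
    Real.sin_pi_div_four, Real.cos_pi_div_four] at h0 h1 h2 h3
  have hs : Real.sqrt 2 * Real.sqrt 2 = 2 := Real.mul_self_sqrt (by norm_num)
  have hA : A = 0 := by nlinarith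
  have hB : B = 0 := by nlinarith
  have hD : D = 0 := by nlinarith
  refine ⟨hA, hB, ?_, hD⟩
  rw [hA, hB] at h3
  nlinarith [h3, hs]

theorem zero_current_plane_waves_travel_at_speed_of_light
    (c k α₀ α₁ : ℝ) (hc : 0 < c) (hα : ¬(α₀ = 0 ∧ α₁ = 0))
    (E β : Fin 4 → ℝ) (hβ₀ : β 0 = 0)
    (hJ : ∀ b : Fin 4, ∀ t x : ℝ,
      (1 / c^2) * deriv (fun s => fieldStrength c k α₀ α₁ E β 0 b s x) t
        - deriv (fun y => fieldStrength c k α₀ α₁ E β 1 b t y) x = 0) :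
    (∀ t x : ℝ,
        fieldStrength c k α₀ α₁ E β 0 1 t x = 0 ∧
        fieldStrength c k α₀ α₁ E β 0 2 t x = 0 ∧
        fieldStrength c k α₀ α₁ E β 0 3 t x = 0 ∧
        fieldStrength c k α₀ α₁ E β 1 2 t x = 0 ∧
        fieldStrength c k α₀ α₁ E β 1 3 t x = 0) ∨
      α₀^2 = c^2 * α₁^2 := by
  have hc2 : (c:ℝ)^2 ≠ 0 := pow_ne_zero 2 hc.ne'
  by_cases hcase : α₀^2 = c^2 * α₁^2
  · exact Or.inr hcase
  left
  have reach : ∀ φ : ℝ, ∃ t x : ℝ, α₀ * t + α₁ * x = φ := by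
    intro φ
    rcases eq_or_ne α₀ 0 with h0 | h0
    · have h1 : α₁ ≠ 0 := fun h1 => hα ⟨h0, h1⟩
      exact ⟨0, φ / α₁, by rw [mul_zero, zero_add, mul_div_cancel₀ _ h1]⟩
    · exact ⟨φ / α₀, 0, by rw [mul_zero, add_zero, mul_div_cancel₀ _ h0]⟩
  -- the common "profile derivative" of F₀₁ vanishes identically
  have hP : ∀ φ : ℝ,
      -(E 1 * α₀ * Real.sin (φ + β 1)) + E 0 * α₁ * Real.sin (φ + β 0)
      + k * E 0 ^ 2 * α₁ * (Real.sin (φ + β 0) ^ 2 - Real.cos (φ + β 0) ^ 2)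
      + k * c ^ 2 * E 1 ^ 2 * α₁ *
          (Real.cos (φ + β 1) ^ 2 - Real.sin (φ + β 1) ^ 2) = 0 := by
    intro φ
    rcases eq_or_ne α₀ 0 with h0 | h0
    · have h1 : α₁ ≠ 0 := fun h1 => hα ⟨h0, h1⟩
      have h := hJ 0 0 (φ / α₁)
      rw [derivF00_t, derivF10_x,
        show α₀ * 0 + α₁ * (φ / α₁) = φ by rw [mul_zero, zero_add, mul_div_cancel₀ _ h1]] at h
      refine mul_left_cancel₀ h1 ?_
      linear_combination h
    · have h := hJ 1 (φ / α₀) 0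
      rw [derivF01_t, derivF11_x,
        show α₀ * (φ / α₀) + α₁ * 0 = φ by rw [mul_zero, add_zero, mul_div_cancel₀ _ h0]] at h
      have hne : (1 / c^2) * α₀ ≠ 0 := mul_ne_zero (one_div_ne_zero hc2) h0
      refine mul_left_cancel₀ hne ?_
      linear_combination h
  have hPb := trig4
      (E 0 * α₁ * Real.cos (β 0) - E 1 * α₀ * Real.cos (β 1))
      (E 0 * α₁ * Real.sin (β 0) - E 1 * α₀ * Real.sin (β 1))
      (2 * k * E 0 ^ 2 * α₁ * Real.sin (β 0) * Real.cos (β 0)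
        - 2 * k * c ^ 2 * E 1 ^ 2 * α₁ * Real.sin (β 1) * Real.cos (β 1))
      (k * c ^ 2 * E 1 ^ 2 * α₁ * (Real.cos (β 1) ^ 2 - Real.sin (β 1) ^ 2)
        - k * E 0 ^ 2 * α₁ * (Real.cos (β 0) ^ 2 - Real.sin (β 0) ^ 2))
      (fun φ => by
        linear_combination (norm := (simp only [Real.sin_add, Real.cos_add]; ring)) hP φ)
  obtain ⟨hA1, hB1, hC1, hD1⟩ := hPb
  have hF01 : ∀ t x : ℝ, fieldStrength c k α₀ α₁ E β 0 1 t x = 0 := by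
    intro t x
    rw [F01_eval]
    linear_combination (norm := (simp only [Real.sin_add, Real.cos_add]; ring))
      (Real.sin (α₀ * t + α₁ * x)) * hB1 - (Real.cos (α₀ * t + α₁ * x)) * hA1
      + (Real.sin (α₀ * t + α₁ * x) * Real.cos (α₀ * t + α₁ * x)) * hD1
      - ((Real.cos (α₀ * t + α₁ * x) ^ 2 - Real.sin (α₀ * t + α₁ * x) ^ 2) / 2) * hC1
  -- transverse components: E 2 = 0
  have hQ2 := trig4
      (-((α₀ ^ 2 - c ^ 2 * α₁ ^ 2) * E 2 * Real.cos (β 2)))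
      (-((α₀ ^ 2 - c ^ 2 * α₁ ^ 2) * E 2 * Real.sin (β 2)))
      (-(k * c ^ 2 * E 1 * E 2 * α₀ * α₁ *
            (Real.sin (β 1) * Real.cos (β 2) + Real.cos (β 1) * Real.sin (β 2)))
        + k * c ^ 2 * E 0 * E 2 * α₁ ^ 2 *
            (Real.sin (β 0) * Real.cos (β 2) + Real.cos (β 0) * Real.sin (β 2)))
      (k * c ^ 2 * E 1 * E 2 * α₀ * α₁ *
            (Real.cos (β 1) * Real.cos (β 2) - Real.sin (β 1) * Real.sin (β 2))
        - k * c ^ 2 * E 0 * E 2 * α₁ ^ 2 *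
            (Real.cos (β 0) * Real.cos (β 2) - Real.sin (β 0) * Real.sin (β 2)))
      (fun φ => by
        obtain ⟨t, x, hφ⟩ := reach φ
        have h := hJ 2 t x
        rw [derivF02_t, derivF12_x, hφ] at h
        field_simp at h
        linear_combination (norm := (simp only [Real.sin_add, Real.cos_add]; ring)) h)
  obtain ⟨hA2, hB2, -, -⟩ := hQ2
  have hM2 : (α₀ ^ 2 - c ^ 2 * α₁ ^ 2) * E 2 = 0 := by
    linear_combination (-(Real.cos (β 2))) * hA2 + (-(Real.sin (β 2))) * hB2
      - ((α₀ ^ 2 - c ^ 2 * α₁ ^ 2) * E 2) * (Real.sin_sq_add_cos_sq (β 2))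
  have hE2 : E 2 = 0 := by
    rcases mul_eq_zero.mp hM2 with h' | h'
    · exact absurd (by linarith : α₀ ^ 2 = c ^ 2 * α₁ ^ 2) hcase
    · exact h'
  -- transverse components: E 3 = 0
  have hQ3 := trig4
      (-((α₀ ^ 2 - c ^ 2 * α₁ ^ 2) * E 3 * Real.cos (β 3)))
      (-((α₀ ^ 2 - c ^ 2 * α₁ ^ 2) * E 3 * Real.sin (β 3)))
      (-(k * c ^ 2 * E 1 * E 3 * α₀ * α₁ *
            (Real.sin (β 1) * Real.cos (β 3) + Real.cos (β 1) * Real.sin (β 3)))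
        + k * c ^ 2 * E 0 * E 3 * α₁ ^ 2 *
            (Real.sin (β 0) * Real.cos (β 3) + Real.cos (β 0) * Real.sin (β 3)))
      (k * c ^ 2 * E 1 * E 3 * α₀ * α₁ *
            (Real.cos (β 1) * Real.cos (β 3) - Real.sin (β 1) * Real.sin (β 3))
        - k * c ^ 2 * E 0 * E 3 * α₁ ^ 2 *
            (Real.cos (β 0) * Real.cos (β 3) - Real.sin (β 0) * Real.sin (β 3)))
      (fun φ => by
        obtain ⟨t, x, hφ⟩ := reach φ
        have h := hJ 3 t x
        rw [derivF03_t, derivF13_x, hφ] at h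
        field_simp at h
        linear_combination (norm := (simp only [Real.sin_add, Real.cos_add]; ring)) h)
  obtain ⟨hA3, hB3, -, -⟩ := hQ3
  have hM3 : (α₀ ^ 2 - c ^ 2 * α₁ ^ 2) * E 3 = 0 := by
    linear_combination (-(Real.cos (β 3))) * hA3 + (-(Real.sin (β 3))) * hB3
      - ((α₀ ^ 2 - c ^ 2 * α₁ ^ 2) * E 3) * (Real.sin_sq_add_cos_sq (β 3))
  have hE3 : E 3 = 0 := by
    rcases mul_eq_zero.mp hM3 with h' | h'
    · exact absurd (by linarith : α₀ ^ 2 = c ^ 2 * α₁ ^ 2) hcase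
    · exact h'
  intro t x
  refine ⟨hF01 t x, ?_, ?_, ?_, ?_⟩
  · rw [F02_eval, hE2]; ring
  · rw [F03_eval, hE3]; ring
  · rw [F12_eval, hE2]; ring
  · rw [F13_eval, hE3]; ring
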